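/- Let a > 0, b > 0 and c ≥ 0 be real numbers. Then the function f(x) = x · log(1 + a/(b x + c)) is strictly increasing on (0, ∞). -/

import Mathlib

/-- For reals `a > 0`, `b > 0`, `c ≥ 0`, the function
`f(x) = x · log(1 + a/(bx + c))` is strictly increasing on `(0, ∞)`. -/
theorem stmt_4 (a b c : ℝ) (ha : 0 < a) (hb : 0 < b) (hc : 0 ≤ c) :
    StrictMonoOn (fun x : ℝ => x * Real.log (1 + a / (b * x + c))) (Set.Ioi 0) := by
  set g : ℝ → ℝ := fun x => x * (Real.log (b * x + c + a) - Real.log (b * x + c)) with hg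
  have key : ∀ x ∈ Set.Ioi (0:ℝ), HasDerivAt g
      ((Real.log (b*x+c+a) - Real.log (b*x+c)) + x * (b/(b*x+c+a) - b/(b*x+c))) x := by
    intro x hx
    have hx0 : (0:ℝ) < x := hx
    have hu : 0 < b * x + c := by positivity
    have hv : 0 < b * x + c + a := by positivity
    have h1 : HasDerivAt (fun x : ℝ => b * x + c + a) b x := by
      simpa using (((hasDerivAt_id x).const_mul b).add_const c).add_const a
    have h2 : HasDerivAt (fun x : ℝ => b * x + c) b x := by
      simpa using ((hasDerivAt_id x).const_mul b).add_const c
    have hl1 := h1.log hv.ne'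
    have hl2 := h2.log hu.ne'
    have := (hasDerivAt_id x).mul (hl1.sub hl2)
    simp only [hg, Pi.mul_def, Pi.sub_def, id_eq, one_mul] at this ⊢
    convert this using 1
  have hmono : StrictMonoOn g (Set.Ioi 0) := by
    apply strictMonoOn_of_deriv_pos (convex_Ioi 0)
    · intro x hx
      exact (key x hx).continuousAt.continuousWithinAt
    · intro x hx
      rw [interior_Ioi] at hx
      rw [(key x hx).deriv]
      have hx0 : (0:ℝ) < x := hx
      have hu : 0 < b * x + c := by positivity
      have hv : 0 < b * x + c + a := by positivity
      have hlt : (b*x+c) / (b*x+c+a) < 1 := by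
        rw [div_lt_one hv]; linarith
      have hlog : Real.log ((b*x+c)/(b*x+c+a)) < (b*x+c)/(b*x+c+a) - 1 :=
        Real.log_lt_sub_one_of_pos (by positivity) (ne_of_lt hlt)
      rw [Real.log_div hu.ne' hv.ne'] at hlog
      have h2 : x * (b/(b*x+c+a) - b/(b*x+c)) - ((b*x+c)/(b*x+c+a) - 1)
          = a * c / ((b*x+c) * (b*x+c+a)) := by
        field_simp
        ring
      have h3 : 0 ≤ a * c / ((b*x+c) * (b*x+c+a)) := by positivity
      linarith
  have heq : ∀ x ∈ Set.Ioi (0:ℝ),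
      x * Real.log (1 + a / (b * x + c)) = g x := by
    intro x hx
    have hx0 : (0:ℝ) < x := hx
    have hu : 0 < b * x + c := by positivity
    have h1 : 1 + a / (b * x + c) = (b * x + c + a) / (b * x + c) := by
      field_simp
    rw [h1, Real.log_div (by positivity) hu.ne']
  intro x hx y hy hxy
  simp only
  rw [heq x hx, heq y hy]
  exact hmono hx hy hxy
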